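/- For every parameter κ ∈ ℂ there exists a continuous curve γ : [0,∞) → ℂ such that Re(γ(t)) → +∞ as t → ∞, limsup_{t→∞} |Im(γ(t))| < ∞, and every point γ(t) is an escaping point of E_κ, i.e. |E_κ^n(γ(t))| → ∞ as n → ∞. -/

import Mathlib

open Filter Complex

namespace EscapingCurveAux

/-- Approximants: `A κ m s` is the `m`-fold pullback by the principal branch of
`w ↦ log (w - κ)` of the real tower `exp^[m] s`. -/
noncomputable def A (κ : ℂ) : ℕ → ℝ → ℂ
  | 0, s => (s : ℂ)
  | (m + 1), s => Complex.log (A κ m (Real.exp s) - κ)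

/-- The threshold. -/
noncomputable def R (κ : ℂ) : ℝ := ‖κ‖ + 9

lemma R_pos (κ : ℂ) : 0 < R κ := by
  have := norm_nonneg κ; unfold R; linarith

lemma exp_ge {s : ℝ} (h : R κ ≤ s) : R κ ≤ Real.exp s :=
  le_trans h (by linarith [Real.add_one_le_exp s])

lemma exp_big {κ : ℂ} {s : ℝ} (h : R κ ≤ s) : (‖κ‖ + 1) * 10 ≤ Real.exp s := by
  have hc : 0 ≤ ‖κ‖ := norm_nonneg κ
  have h1 : Real.exp (‖κ‖ + 9) ≤ Real.exp s := Real.exp_le_exp.mpr (by unfold R at h; linarith)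
  rw [Real.exp_add] at h1
  have h2 : ‖κ‖ + 1 ≤ Real.exp (‖κ‖) := Real.add_one_le_exp _
  have h3 : (10 : ℝ) ≤ Real.exp 9 := by linarith [Real.add_one_le_exp (9:ℝ)]
  nlinarith [Real.exp_pos (‖κ‖), Real.exp_pos (9:ℝ)]

lemma exp_big' {κ : ℂ} {s : ℝ} (h : R κ ≤ s) : ‖κ‖ + 10 ≤ Real.exp s := by
  have := exp_big h
  have hc : 0 ≤ ‖κ‖ := norm_nonneg κ
  linarith

/-- log is 2-Lipschitz on the closed ball of radius 1/2 around 1. -/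
lemma lip_log : LipschitzOnWith 2 Complex.log (Metric.closedBall (1 : ℂ) (1/2)) := by
  apply Convex.lipschitzOnWith_of_nnnorm_hasDerivWithin_le (f' := fun z => z⁻¹)
    (convex_closedBall _ _)
  · intro z hz
    have hre : (1:ℝ)/2 ≤ z.re := by
      have h1 : ‖z - 1‖ ≤ 1/2 := by
        simpa [Complex.dist_eq] using (Metric.mem_closedBall.mp hz)
      have h2 : |(z - 1).re| ≤ 1/2 := le_trans (Complex.abs_re_le_norm _) h1
      have := abs_le.mp h2
      simp only [Complex.sub_re, Complex.one_re] at this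
      linarith [this.1]
    exact (Complex.hasDerivAt_log (Or.inl (by linarith))).hasDerivWithinAt
  · intro z hz
    have hre : (1:ℝ)/2 ≤ z.re := by
      have h1 : ‖z - 1‖ ≤ 1/2 := by
        simpa [Complex.dist_eq] using (Metric.mem_closedBall.mp hz)
      have h2 : |(z - 1).re| ≤ 1/2 := le_trans (Complex.abs_re_le_norm _) h1
      have := abs_le.mp h2
      simp only [Complex.sub_re, Complex.one_re] at this
      linarith [this.1]
    have hz2 : (1:ℝ)/2 ≤ ‖z‖ := le_trans hre (Complex.re_le_norm z)
    have hz0 : z ≠ 0 := by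
      intro h; rw [h] at hz2; simp at hz2; linarith
    rw [← NNReal.coe_le_coe]
    push_cast
    rw [norm_inv]
    rw [inv_le_comm₀ (by positivity) (by norm_num)]
    simpa using hz2

/-- `w ↦ log (w - κ)` is (1/2)-Lipschitz on the half plane `re ≥ |κ| + 2`. -/
lemma lip_L (κ : ℂ) : LipschitzOnWith (1/2) (fun w => Complex.log (w - κ))
    {w : ℂ | ‖κ‖ + 2 ≤ w.re} := by
  have hconv : Convex ℝ {w : ℂ | ‖κ‖ + 2 ≤ w.re} := convex_halfSpace_re_ge _
  apply Convex.lipschitzOnWith_of_nnnorm_hasDerivWithin_le (f' := fun w => (w - κ)⁻¹) hconv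
  · intro w hw
    have hre : (2:ℝ) ≤ (w - κ).re := by
      have hk : κ.re ≤ ‖κ‖ := Complex.re_le_norm κ
      have := hw
      simp only [Set.mem_setOf_eq] at this
      simp only [Complex.sub_re]; linarith
    have h := (Complex.hasDerivAt_log (z := w - κ) (Or.inl (by linarith))).comp w
      ((hasDerivAt_id w).sub_const κ)
    rw [mul_one] at h
    exact h.hasDerivWithinAt
  · intro w hw
    have hre : (2:ℝ) ≤ (w - κ).re := by
      have hk : κ.re ≤ ‖κ‖ := Complex.re_le_norm κ
      simp only [Set.mem_setOf_eq] at hw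
      simp only [Complex.sub_re]; linarith
    have habs : (2:ℝ) ≤ ‖w - κ‖ := le_trans hre (Complex.re_le_norm _)
    rw [← NNReal.coe_le_coe]
    push_cast
    rw [norm_inv, inv_le_comm₀ (by linarith) (by norm_num)]
    linarith

/-- key step: if `u` is within 1 of `e^s` then `log (u - κ)` is within 1 of `s`. -/
lemma log_step (κ : ℂ) {s : ℝ} {u : ℂ} (hs : R κ ≤ s)
    (hu : ‖u - Real.exp s‖ ≤ 1) :
    ‖Complex.log (u - κ) - s‖ ≤ 1 := by
  set c := ‖κ‖ with hc
  have hexp : (c + 1) * 10 ≤ Real.exp s := exp_big hs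
  have hepos : (0:ℝ) < Real.exp s := Real.exp_pos s
  set v : ℂ := (u - κ) / (Real.exp s : ℂ) with hvdef
  have hv1 : ‖v - 1‖ ≤ 1/2 := by
    have : v - 1 = (u - Real.exp s - κ) / (Real.exp s : ℂ) := by
      rw [hvdef, eq_div_iff (by exact_mod_cast hepos.ne'), sub_mul, div_mul_cancel₀ _ (by exact_mod_cast hepos.ne')]
      ring
    rw [this, norm_div]
    have hnum : ‖u - Real.exp s - κ‖ ≤ 1 + c := by
      calc ‖u - Real.exp s - κ‖ ≤ ‖u - Real.exp s‖ + ‖κ‖ :=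
            (norm_sub_le _ _)
        _ ≤ 1 + c := by linarith
    have hden : ‖(Real.exp s : ℂ)‖ = Real.exp s := by
      simp [abs_of_pos hepos]
    rw [hden]
    rw [div_le_iff₀ hepos]
    have hcge : (0:ℝ) ≤ c := norm_nonneg κ
    nlinarith [hexp]
  have hvne : v ≠ 0 := by
    intro h
    rw [h] at hv1
    simp at hv1
    norm_num at hv1
  have hsplit : Complex.log (u - κ) = (s : ℂ) + Complex.log v := by
    have huv : u - κ = (Real.exp s : ℂ) * v := by
      rw [hvdef]; field_simp
    rw [huv, Complex.log_ofReal_mul hepos hvne, Real.log_exp]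
  have hlogv : ‖Complex.log v‖ ≤ 1 := by
    have h1 : v ∈ Metric.closedBall (1 : ℂ) (1/2) := by
      simpa [Metric.mem_closedBall, Complex.dist_eq] using hv1
    have h2 : (1 : ℂ) ∈ Metric.closedBall (1 : ℂ) (1/2) :=
      Metric.mem_closedBall_self (by norm_num)
    have := lip_log.dist_le_mul v h1 1 h2
    rw [Complex.log_one] at this
    simp only [Complex.dist_eq, sub_zero] at this
    calc ‖Complex.log v‖ ≤ 2 * ‖v - 1‖ := by
          push_cast at this; linarith
      _ ≤ 2 * (1/2) := by linarith
      _ = 1 := by norm_num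
  rw [hsplit]
  simpa using hlogv

lemma A_close (κ : ℂ) : ∀ m : ℕ, ∀ s : ℝ, R κ ≤ s →
    ‖A κ m s - s‖ ≤ 1 := by
  intro m
  induction m with
  | zero => intro s _; simp [A]
  | succ m ih =>
    intro s hs
    have h1 : ‖A κ m (Real.exp s) - Real.exp s‖ ≤ 1 := ih _ (exp_ge hs)
    exact log_step κ hs h1

lemma A_re (κ : ℂ) {m : ℕ} {s : ℝ} (hs : R κ ≤ s) : s - 1 ≤ (A κ m s).re := by
  have h := A_close κ m s hs
  have h2 : |(A κ m s - s).re| ≤ 1 := le_trans (Complex.abs_re_le_norm _) h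
  have := (abs_le.mp h2).1
  simp only [Complex.sub_re, Complex.ofReal_re] at this
  linarith

lemma A_im (κ : ℂ) {m : ℕ} {s : ℝ} (hs : R κ ≤ s) : |(A κ m s).im| ≤ 1 := by
  have h := A_close κ m s hs
  have h2 : |(A κ m s - s).im| ≤ 1 := le_trans (Complex.abs_im_le_norm _) h
  simpa using h2

lemma A_mem_halfplane (κ : ℂ) {m : ℕ} {s : ℝ} (hs : R κ ≤ s) :
    A κ m (Real.exp s) ∈ {w : ℂ | ‖κ‖ + 2 ≤ w.re} := by
  have h1 : Real.exp s - 1 ≤ (A κ m (Real.exp s)).re := A_re κ (exp_ge hs)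
  have h2 := exp_big' hs
  simp only [Set.mem_setOf_eq]
  linarith

lemma A_cauchy (κ : ℂ) : ∀ m : ℕ, ∀ s : ℝ, R κ ≤ s →
    dist (A κ m s) (A κ (m+1) s) ≤ (1/2) ^ m := by
  intro m
  induction m with
  | zero =>
    intro s hs
    have h := log_step κ (u := (Real.exp s : ℂ)) hs (by simp)
    have : A κ 1 s = Complex.log ((Real.exp s : ℂ) - κ) := by simp [A]
    rw [Complex.dist_eq, this]
    simp only [A]
    rw [← norm_neg]
    simpa [neg_sub] using h
  | succ m ih =>
    intro s hs
    have hmem1 := A_mem_halfplane κ (m := m) hs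
    have hmem2 := A_mem_halfplane κ (m := m+1) hs
    have hlip := (lip_L κ).dist_le_mul _ hmem1 _ hmem2
    have hih := ih (Real.exp s) (exp_ge hs)
    calc dist (A κ (m+1) s) (A κ (m+2) s)
        = dist (Complex.log (A κ m (Real.exp s) - κ)) (Complex.log (A κ (m+1) (Real.exp s) - κ)) := by
          simp [A]
      _ ≤ (1/2 : ℝ) * dist (A κ m (Real.exp s)) (A κ (m+1) (Real.exp s)) := by
          simpa using hlip
      _ ≤ (1/2) * (1/2)^m := by
          have : (0:ℝ) ≤ (1/2:ℝ) := by norm_num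
          nlinarith [dist_nonneg (x := A κ m (Real.exp s)) (y := A κ (m+1) (Real.exp s))]
      _ = (1/2)^(m+1) := by ring

lemma A_cauchySeq (κ : ℂ) {s : ℝ} (hs : R κ ≤ s) : CauchySeq (fun m => A κ m s) :=
  cauchySeq_of_le_geometric (1/2) 1 (by norm_num)
    (fun n => by simpa using A_cauchy κ n s hs)

/-- The limit curve value. -/
noncomputable def Z (κ : ℂ) (s : ℝ) : ℂ := limUnder atTop (fun m => A κ m s)

lemma Z_tendsto (κ : ℂ) {s : ℝ} (hs : R κ ≤ s) :
    Tendsto (fun m => A κ m s) atTop (nhds (Z κ s)) :=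
  (A_cauchySeq κ hs).tendsto_limUnder

lemma Z_dist (κ : ℂ) {s : ℝ} (hs : R κ ≤ s) (m : ℕ) :
    dist (A κ m s) (Z κ s) ≤ 1 * (1/2)^m / (1 - 1/2) := by
  exact dist_le_of_le_geometric_of_tendsto (1/2) 1 (by norm_num)
    (fun n => by simpa using A_cauchy κ n s hs) (Z_tendsto κ hs) m

lemma Z_close (κ : ℂ) {s : ℝ} (hs : R κ ≤ s) : ‖Z κ s - s‖ ≤ 1 := by
  have h : Tendsto (fun m => ‖A κ m s - s‖) atTop
      (nhds (‖Z κ s - s‖)) :=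
    (continuous_norm.tendsto _).comp ((Z_tendsto κ hs).sub_const (s : ℂ))
  exact le_of_tendsto h (Filter.Eventually.of_forall fun m => A_close κ m s hs)

lemma Z_re (κ : ℂ) {s : ℝ} (hs : R κ ≤ s) : s - 1 ≤ (Z κ s).re := by
  have h2 : |(Z κ s - s).re| ≤ 1 := le_trans (Complex.abs_re_le_norm _) (Z_close κ hs)
  have := (abs_le.mp h2).1
  simp only [Complex.sub_re, Complex.ofReal_re] at this
  linarith

lemma Z_im (κ : ℂ) {s : ℝ} (hs : R κ ≤ s) : |(Z κ s).im| ≤ 1 := by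
  have h2 : |(Z κ s - s).im| ≤ 1 := le_trans (Complex.abs_im_le_norm _) (Z_close κ hs)
  simpa using h2

lemma A_contOn (κ : ℂ) : ∀ m : ℕ, ContinuousOn (A κ m) (Set.Ici (R κ)) := by
  intro m
  induction m with
  | zero => exact Complex.continuous_ofReal.continuousOn
  | succ m ih =>
    show ContinuousOn (fun s => Complex.log (A κ m (Real.exp s) - κ)) (Set.Ici (R κ))
    have hcomp : ContinuousOn (fun s => A κ m (Real.exp s) - κ) (Set.Ici (R κ)) := by
      apply ContinuousOn.sub _ continuousOn_const
      exact ih.comp Real.continuous_exp.continuousOn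
        (fun s hs => Set.mem_Ici.mpr (exp_ge (Set.mem_Ici.mp hs)))
    apply hcomp.clog
    intro s hs
    left
    have := A_mem_halfplane κ (m := m) (Set.mem_Ici.mp hs)
    simp only [Set.mem_setOf_eq] at this
    simp only [Complex.sub_re]
    have hk : κ.re ≤ ‖κ‖ := Complex.re_le_norm κ
    linarith

lemma Z_contOn (κ : ℂ) : ContinuousOn (Z κ) (Set.Ici (R κ)) := by
  have huni : TendstoUniformlyOn (A κ) (Z κ) atTop (Set.Ici (R κ)) := by
    rw [Metric.tendstoUniformlyOn_iff]
    intro ε hε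
    obtain ⟨N, hN⟩ := exists_pow_lt_of_lt_one (by positivity : (0:ℝ) < ε / 2) (by norm_num : (1:ℝ)/2 < 1)
    filter_upwards [Filter.eventually_ge_atTop N] with m hm s hs
    have h := Z_dist κ (Set.mem_Ici.mp hs) m
    have h2 : (1:ℝ) * (1/2)^m / (1 - 1/2) = 2 * (1/2)^m := by ring
    rw [h2] at h
    have h3 : ((1:ℝ)/2)^m ≤ (1/2)^N := pow_le_pow_of_le_one (by norm_num) (by norm_num) hm
    rw [dist_comm] at h
    calc dist (Z κ s) (A κ m s) ≤ 2 * (1/2)^m := h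
      _ ≤ 2 * (1/2)^N := by linarith
      _ < 2 * (ε/2) := by linarith [hN]
      _ = ε := by ring
  exact huni.continuousOn (Filter.Frequently.of_forall (A_contOn κ))

lemma Z_ne (κ : ℂ) {s : ℝ} (hs : R κ ≤ s) : Z κ (Real.exp s) - κ ≠ 0 := by
  have h1 : Real.exp s - 1 ≤ (Z κ (Real.exp s)).re := Z_re κ (exp_ge hs)
  have h2 := exp_big' hs
  have hk : κ.re ≤ ‖κ‖ := Complex.re_le_norm κ
  intro h
  have : (Z κ (Real.exp s) - κ).re = 0 := by rw [h]; simp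
  simp only [Complex.sub_re] at this
  linarith

lemma Z_rec (κ : ℂ) {s : ℝ} (hs : R κ ≤ s) :
    Z κ s = Complex.log (Z κ (Real.exp s) - κ) := by
  have h1 : Tendsto (fun m => A κ (m+1) s) atTop (nhds (Z κ s)) :=
    (Z_tendsto κ hs).comp (tendsto_add_atTop_nat 1)
  have hmem : Z κ (Real.exp s) - κ ∈ Complex.slitPlane := by
    left
    have h1' : Real.exp s - 1 ≤ (Z κ (Real.exp s)).re := Z_re κ (exp_ge hs)
    have h2 := exp_big' hs
    have hk : κ.re ≤ ‖κ‖ := Complex.re_le_norm κ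
    simp only [Complex.sub_re]
    linarith
  have h2 : Tendsto (fun m => A κ (m+1) s) atTop
      (nhds (Complex.log (Z κ (Real.exp s) - κ))) := by
    have hlog := (continuousAt_clog hmem).tendsto
    have hin : Tendsto (fun m => A κ m (Real.exp s) - κ) atTop
        (nhds (Z κ (Real.exp s) - κ)) := (Z_tendsto κ (exp_ge hs)).sub_const κ
    exact hlog.comp hin
  exact tendsto_nhds_unique h1 h2

lemma Z_step (κ : ℂ) {s : ℝ} (hs : R κ ≤ s) :
    Complex.exp (Z κ s) + κ = Z κ (Real.exp s) := by
  rw [Z_rec κ hs, Complex.exp_log (Z_ne κ hs)]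
  ring

lemma exp_iter_ge (s : ℝ) : ∀ n : ℕ, s + n ≤ Real.exp^[n] s := by
  intro n
  induction n with
  | zero => simp
  | succ n ih =>
    rw [Function.iterate_succ_apply']
    have := Real.add_one_le_exp (Real.exp^[n] s)
    push_cast
    linarith

lemma exp_iter_mem (κ : ℂ) {s : ℝ} (hs : R κ ≤ s) (n : ℕ) : R κ ≤ Real.exp^[n] s := by
  have := exp_iter_ge s n
  have : s ≤ Real.exp^[n] s := by
    have h := exp_iter_ge s n
    have : (0:ℝ) ≤ n := Nat.cast_nonneg n
    linarith
  linarith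

lemma Z_orbit (κ : ℂ) : ∀ n : ℕ, ∀ s : ℝ, R κ ≤ s →
    (fun z => Complex.exp z + κ)^[n] (Z κ s) = Z κ (Real.exp^[n] s) := by
  intro n
  induction n with
  | zero => intro s _; simp
  | succ n ih =>
    intro s hs
    rw [Function.iterate_succ_apply', ih s hs, Function.iterate_succ_apply']
    exact Z_step κ (exp_iter_mem κ hs n)

end EscapingCurveAux

/-- For every parameter `κ ∈ ℂ` there is a continuous curve `γ : [0,∞) → ℂ` whose
real part tends to `+∞`, whose imaginary part has finite `limsup` in absolute value
(i.e. is eventually bounded), and all of whose points are escaping points of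
`E_κ(z) = exp z + κ`. -/
theorem exponential_has_escaping_curve (κ : ℂ) :
    ∃ γ : ℝ → ℂ, ContinuousOn γ (Set.Ici 0) ∧
      Tendsto (fun t => (γ t).re) atTop atTop ∧
      (∃ C : ℝ, ∀ᶠ t in atTop, |(γ t).im| ≤ C) ∧
      ∀ t ∈ Set.Ici (0 : ℝ),
        Tendsto (fun n => ‖(fun z => Complex.exp z + κ)^[n] (γ t)‖)
          atTop atTop := by
  classical
  open EscapingCurveAux in
  refine ⟨fun t => EscapingCurveAux.Z κ (max t (EscapingCurveAux.R κ)), ?_, ?_, ?_, ?_⟩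
  · apply (EscapingCurveAux.Z_contOn κ).comp
      ((continuous_id.max continuous_const).continuousOn)
    intro t _
    exact Set.mem_Ici.mpr (le_max_right _ _)
  · apply tendsto_atTop_mono (f := fun t => t - 1)
    · intro t
      have h1 : EscapingCurveAux.R κ ≤ max t (EscapingCurveAux.R κ) := le_max_right _ _
      have h2 := EscapingCurveAux.Z_re κ h1
      have h3 : t ≤ max t (EscapingCurveAux.R κ) := le_max_left _ _
      linarith
    · exact tendsto_atTop_add_const_right _ _ tendsto_id
  · refine ⟨1, Filter.Eventually.of_forall fun t => ?_⟩
    exact EscapingCurveAux.Z_im κ (le_max_right _ _)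
  · intro t _
    set s := max t (EscapingCurveAux.R κ) with hsdef
    have hs : EscapingCurveAux.R κ ≤ s := le_max_right _ _
    apply tendsto_atTop_mono (f := fun n : ℕ => (n : ℝ) + (s - 1))
    · intro n
      rw [EscapingCurveAux.Z_orbit κ n s hs]
      have h1 : Real.exp^[n] s - 1 ≤ (EscapingCurveAux.Z κ (Real.exp^[n] s)).re :=
        EscapingCurveAux.Z_re κ (EscapingCurveAux.exp_iter_mem κ hs n)
      have h2 := EscapingCurveAux.exp_iter_ge s n
      have h3 : (EscapingCurveAux.Z κ (Real.exp^[n] s)).re ≤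
          ‖EscapingCurveAux.Z κ (Real.exp^[n] s)‖ := Complex.re_le_norm _
      linarith
    · exact tendsto_atTop_add_const_right _ _ tendsto_natCast_atTop_atTop
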